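/- Let R be a commutative ring, f ∈ R[[X]] a formal power series with coefficients c_i, and n ≥ 1 an integer. Define the truncation T_n f to be the power series whose i-th coefficient equals c_i for i ≥ n and 0 for i < n, and set μ := ∑_{j=0}^{n−1} (−1)^{n−1−j} c_j. Then, in R[[X]] (where 1+X is a unit), T_n( (X/(1+X))·f ) = (X/(1+X))·(T_n f) + μ·X^n/(1+X). -/

import Mathlib

open PowerSeries

/-- The truncation operator `T n`: keeps the coefficients of `X^i` for `i ≥ n` and
kills those for `i < n` (the overbrace operator of the paper). -/
noncomputable def tailTrunc (R : Type*) [CommRing R] (n : ℕ) (f : PowerSeries R) :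
    PowerSeries R :=
  PowerSeries.mk fun i => if n ≤ i then PowerSeries.coeff (R := R) i f else 0

lemma coeff_inv_one_add_X {R : Type*} [CommRing R] {g : PowerSeries R}
    (hg : (1 + PowerSeries.X) * g = 1) (i : ℕ) :
    PowerSeries.coeff (R := R) i g = (-1 : R) ^ i := by
  have hg' : g = 1 - PowerSeries.X * g := by linear_combination hg
  induction i with
  | zero =>
    rw [hg']
    simp
  | succ k ih =>
    rw [hg', map_sub, coeff_succ_X_mul, ih]
    simp [pow_succ]

/-- Let `R` be a commutative ring, `f ∈ R[[X]]` with coefficients `c_i`, and `n ≥ 1`.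
With `g` the inverse of `1 + X` (so `X·g` plays the role of `X/(1+X)`) and
`μ = ∑_{j=0}^{n−1} (−1)^{n−1−j} c_j`, one has
`T_n((X/(1+X))·f) = (X/(1+X))·(T_n f) + μ·X^n/(1+X)` in `R[[X]]`. -/
theorem tailTrunc_mul_X_div_one_add_X {R : Type*} [CommRing R]
    (f g : PowerSeries R) (hg : (1 + PowerSeries.X) * g = 1) (n : ℕ) (hn : 1 ≤ n)
    (μ : R) (hμ : μ = ∑ j ∈ Finset.range n, (-1 : R) ^ (n - 1 - j) * PowerSeries.coeff (R := R) j f) :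
    tailTrunc R n (PowerSeries.X * g * f)
      = PowerSeries.X * g * tailTrunc R n f
        + PowerSeries.C (R := R) μ * (PowerSeries.X ^ n * g) := by
  have hcg := coeff_inv_one_add_X hg
  have hXg : ∀ k, PowerSeries.coeff (R := R) k (PowerSeries.X * g)
      = if 1 ≤ k then (-1 : R) ^ (k - 1) else 0 := by
    intro k
    cases k with
    | zero => simp
    | succ m => simp [coeff_succ_X_mul, hcg]
  ext i
  rw [tailTrunc, coeff_mk, map_add, coeff_C_mul, coeff_X_pow_mul', hcg]
  by_cases h : n ≤ i
  · rw [if_pos h, if_pos h]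
    -- rewrite products with the `X*g` factor on the right
    rw [show PowerSeries.X * g * f = f * (PowerSeries.X * g) by ring,
        show PowerSeries.X * g * tailTrunc R n f = tailTrunc R n f * (PowerSeries.X * g) by ring,
        PowerSeries.coeff_mul, PowerSeries.coeff_mul,
        Finset.Nat.sum_antidiagonal_eq_sum_range_succ
          (fun a b => PowerSeries.coeff (R := R) a f * PowerSeries.coeff (R := R) b (PowerSeries.X * g)) i,
        Finset.Nat.sum_antidiagonal_eq_sum_range_succ
          (fun a b => PowerSeries.coeff (R := R) a (tailTrunc R n f)
            * PowerSeries.coeff (R := R) b (PowerSeries.X * g)) i]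
    simp only [tailTrunc, coeff_mk]
    have hsplit : ∀ k ∈ Finset.range (i + 1),
        PowerSeries.coeff (R := R) k f * PowerSeries.coeff (R := R) (i - k) (PowerSeries.X * g)
          = (if n ≤ k then PowerSeries.coeff (R := R) k f else 0)
              * PowerSeries.coeff (R := R) (i - k) (PowerSeries.X * g)
            + (if n ≤ k then 0 else
                PowerSeries.coeff (R := R) k f * PowerSeries.coeff (R := R) (i - k) (PowerSeries.X * g)) := by
      intro k _
      split_ifs <;> ring
    rw [Finset.sum_congr rfl hsplit, Finset.sum_add_distrib]
    congr 1
    -- remaining: the head part gives the μ-term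
    have hsub : Finset.range n ⊆ Finset.range (i + 1) := by
      apply Finset.range_subset_range.2; omega
    rw [← Finset.sum_subset hsub (by
      intro k hk hk'
      rw [if_pos (by simp at hk'; omega)])]
    rw [hμ, Finset.sum_mul]
    apply Finset.sum_congr rfl
    intro j hj
    have hj' : j < n := Finset.mem_range.1 hj
    rw [if_neg (by omega), hXg, if_pos (by omega)]
    rw [show (-1 : R) ^ (n - 1 - j) * PowerSeries.coeff (R := R) j f * (-1) ^ (i - n)
        = PowerSeries.coeff (R := R) j f * ((-1) ^ (n - 1 - j) * (-1) ^ (i - n)) by ring,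
      ← pow_add]
    congr 2
    omega
  · rw [if_neg h, if_neg h, mul_zero, add_zero]
    rw [PowerSeries.coeff_mul]
    symm
    apply Finset.sum_eq_zero
    rintro ⟨a, b⟩ hab
    rw [Finset.HasAntidiagonal.mem_antidiagonal] at hab
    have : PowerSeries.coeff (R := R) b (tailTrunc R n f) = 0 := by
      rw [tailTrunc, coeff_mk, if_neg (by omega)]
    rw [this, mul_zero]
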